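/- Let T > 0, γ, M ∈ ℝ, and let B : (0,T)×ℝ² → ℝ, v_S, v_L : (0,T)×ℝ² → ℝ², P : (0,T)×ℝ² → ℝ and Γ_B : (0,T)×ℝ² → ℝ be C¹ functions with 0 < B < 1 everywhere, satisfying on (0,T)×ℝ²: ∂ₜv_S + (v_S·∇)v_S + γ∇B/B + ∇P = (M+Γ_B)(v_L−v_S)/B and ∂ₜv_L + (v_L·∇)v_L + ∇P = M(v_S−v_L)/(1−B). Then w := B v_S + (1−B) v_L and z := v_S − v_L satisfy the relative velocity equation ∂ₜz + (w·∇)z + (z·∇)w + (z·∇)((1−B)z) − B(z·∇)z + γ∇B/B = −z·(M + Γ_B(1−B))/(B(1−B)). -/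

import Mathlib

/-- Partial derivative in the time variable `t` of a function on `(t, x₁, x₂)`-space. -/
noncomputable def pdt (f : ℝ × ℝ × ℝ → ℝ) (p : ℝ × ℝ × ℝ) : ℝ :=
  fderiv ℝ f p (1, 0, 0)

/-- Partial derivative in the first spatial variable `x₁`. -/
noncomputable def pdx (f : ℝ × ℝ × ℝ → ℝ) (p : ℝ × ℝ × ℝ) : ℝ :=
  fderiv ℝ f p (0, 1, 0)

/-- Partial derivative in the second spatial variable `x₂`. -/
noncomputable def pdy (f : ℝ × ℝ × ℝ → ℝ) (p : ℝ × ℝ × ℝ) : ℝ :=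
  fderiv ℝ f p (0, 0, 1)

/-- The space-time domain `(0,T) × ℝ²`, viewed as a subset of `ℝ × ℝ × ℝ`. -/
def dom (T : ℝ) : Set (ℝ × ℝ × ℝ) := {p | 0 < p.1 ∧ p.1 < T}

lemma isOpen_dom (T : ℝ) : IsOpen (dom T) := by
  have : dom T = (fun p : ℝ × ℝ × ℝ => p.1) ⁻¹' (Set.Ioo 0 T) := rfl
  rw [this]
  exact isOpen_Ioo.preimage continuous_fst

lemma fd_sub' (f g : ℝ × ℝ × ℝ → ℝ) (p : ℝ × ℝ × ℝ)
    (hf : DifferentiableAt ℝ f p) (hg : DifferentiableAt ℝ g p) (v : ℝ × ℝ × ℝ) :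
    fderiv ℝ (fun q => f q - g q) p v = fderiv ℝ f p v - fderiv ℝ g p v := by
  rw [fderiv_fun_sub hf hg]; simp

lemma fd_one_sub (Bf : ℝ × ℝ × ℝ → ℝ) (p : ℝ × ℝ × ℝ)
    (hB : DifferentiableAt ℝ Bf p) (v : ℝ × ℝ × ℝ) :
    fderiv ℝ (fun q => 1 - Bf q) p v = -(fderiv ℝ Bf p v) := by
  rw [fderiv_const_sub 1]; simp

lemma fd_comb (Bf f g : ℝ × ℝ × ℝ → ℝ) (p : ℝ × ℝ × ℝ)
    (hB : DifferentiableAt ℝ Bf p) (hf : DifferentiableAt ℝ f p)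
    (hg : DifferentiableAt ℝ g p) (v : ℝ × ℝ × ℝ) :
    fderiv ℝ (fun q => Bf q * f q + (1 - Bf q) * g q) p v =
      fderiv ℝ Bf p v * (f p - g p) + Bf p * fderiv ℝ f p v +
        (1 - Bf p) * fderiv ℝ g p v := by
  have h1 : DifferentiableAt ℝ (fun q => 1 - Bf q) p :=
    (differentiableAt_const (1 : ℝ)).sub hB
  rw [fderiv_fun_add (f := fun q => Bf q * f q) (g := fun q => (1 - Bf q) * g q) (hB.mul hf) (h1.mul hg), ContinuousLinearMap.add_apply,
    fderiv_fun_mul hB hf, fderiv_fun_mul h1 hg]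
  simp only [ContinuousLinearMap.add_apply, ContinuousLinearMap.smul_apply,
    smul_eq_mul, fd_one_sub Bf p hB]
  ring

lemma fd_ob (Bf f g : ℝ × ℝ × ℝ → ℝ) (p : ℝ × ℝ × ℝ)
    (hB : DifferentiableAt ℝ Bf p) (hf : DifferentiableAt ℝ f p)
    (hg : DifferentiableAt ℝ g p) (v : ℝ × ℝ × ℝ) :
    fderiv ℝ (fun q => (1 - Bf q) * (f q - g q)) p v =
      -(fderiv ℝ Bf p v) * (f p - g p) +
        (1 - Bf p) * (fderiv ℝ f p v - fderiv ℝ g p v) := by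
  have h1 : DifferentiableAt ℝ (fun q => 1 - Bf q) p :=
    (differentiableAt_const (1 : ℝ)).sub hB
  rw [fderiv_fun_mul (c := fun q => 1 - Bf q) (d := fun q => f q - g q) h1 (hf.sub hg)]
  simp only [ContinuousLinearMap.add_apply, ContinuousLinearMap.smul_apply,
    smul_eq_mul, fd_one_sub Bf p hB, fd_sub' f g p hf hg]
  ring

/-- If `(B, v_S, v_L, P)` is a `C¹` solution of the two momentum equations of the
two-phase system on `(0,T) × ℝ²` with `0 < B < 1`, then `w := B v_S + (1−B) v_L` and
`z := v_S − v_L` satisfy the relative velocity equation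
`∂ₜz + (w·∇)z + (z·∇)w + (z·∇)((1−B)z) − B(z·∇)z + γ∇B/B = −z(M + Γ_B(1−B))/(B(1−B))`. -/
theorem stmt8 (T γ M : ℝ) (hT : 0 < T)
    (B vS1 vS2 vL1 vL2 P ΓB : ℝ × ℝ × ℝ → ℝ)
    (hBreg : ContDiffOn ℝ 1 B (dom T)) (hvS1 : ContDiffOn ℝ 1 vS1 (dom T))
    (hvS2 : ContDiffOn ℝ 1 vS2 (dom T)) (hvL1 : ContDiffOn ℝ 1 vL1 (dom T))
    (hvL2 : ContDiffOn ℝ 1 vL2 (dom T)) (hP : ContDiffOn ℝ 1 P (dom T))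
    (hΓ : ContDiffOn ℝ 1 ΓB (dom T))
    (hB0 : ∀ p ∈ dom T, 0 < B p) (hB1 : ∀ p ∈ dom T, B p < 1)
    (hmomS1 : ∀ p ∈ dom T,
      pdt vS1 p + (vS1 p * pdx vS1 p + vS2 p * pdy vS1 p) + γ * pdx B p / B p + pdx P p =
        (M + ΓB p) * (vL1 p - vS1 p) / B p)
    (hmomS2 : ∀ p ∈ dom T,
      pdt vS2 p + (vS1 p * pdx vS2 p + vS2 p * pdy vS2 p) + γ * pdy B p / B p + pdy P p =
        (M + ΓB p) * (vL2 p - vS2 p) / B p)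
    (hmomL1 : ∀ p ∈ dom T,
      pdt vL1 p + (vL1 p * pdx vL1 p + vL2 p * pdy vL1 p) + pdx P p =
        M * (vS1 p - vL1 p) / (1 - B p))
    (hmomL2 : ∀ p ∈ dom T,
      pdt vL2 p + (vL1 p * pdx vL2 p + vL2 p * pdy vL2 p) + pdy P p =
        M * (vS2 p - vL2 p) / (1 - B p))
    (w1 w2 z1 z2 : ℝ × ℝ × ℝ → ℝ)
    (hw1 : w1 = fun q => B q * vS1 q + (1 - B q) * vL1 q)
    (hw2 : w2 = fun q => B q * vS2 q + (1 - B q) * vL2 q)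
    (hz1 : z1 = fun q => vS1 q - vL1 q) (hz2 : z2 = fun q => vS2 q - vL2 q) :
    ∀ p ∈ dom T,
      (pdt z1 p + (w1 p * pdx z1 p + w2 p * pdy z1 p) +
        (z1 p * pdx w1 p + z2 p * pdy w1 p) +
        (z1 p * pdx (fun q => (1 - B q) * z1 q) p +
          z2 p * pdy (fun q => (1 - B q) * z1 q) p) -
        B p * (z1 p * pdx z1 p + z2 p * pdy z1 p) + γ * pdx B p / B p =
        -(z1 p * (M + ΓB p * (1 - B p))) / (B p * (1 - B p))) ∧
      (pdt z2 p + (w1 p * pdx z2 p + w2 p * pdy z2 p) +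
        (z1 p * pdx w2 p + z2 p * pdy w2 p) +
        (z1 p * pdx (fun q => (1 - B q) * z2 q) p +
          z2 p * pdy (fun q => (1 - B q) * z2 q) p) -
        B p * (z1 p * pdx z2 p + z2 p * pdy z2 p) + γ * pdy B p / B p =
        -(z2 p * (M + ΓB p * (1 - B p))) / (B p * (1 - B p))) := by
  subst hw1 hw2 hz1 hz2
  intro p hp
  have hopen := isOpen_dom T
  have hd : ∀ f : ℝ × ℝ × ℝ → ℝ, ContDiffOn ℝ 1 f (dom T) → DifferentiableAt ℝ f p :=
    fun f hf => (hf.contDiffAt (hopen.mem_nhds hp)).differentiableAt one_ne_zero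
  have dB := hd B hBreg
  have dS1 := hd vS1 hvS1
  have dS2 := hd vS2 hvS2
  have dL1 := hd vL1 hvL1
  have dL2 := hd vL2 hvL2
  have hb : B p ≠ 0 := ne_of_gt (hB0 p hp)
  have h1b : (1 : ℝ) - B p ≠ 0 := sub_ne_zero.mpr (ne_of_gt (hB1 p hp))
  have hS1 := hmomS1 p hp
  have hS2 := hmomS2 p hp
  have hL1 := hmomL1 p hp
  have hL2 := hmomL2 p hp
  simp only [pdt, pdx, pdy] at hS1 hS2 hL1 hL2 ⊢
  simp only [fd_sub' vS1 vL1 p dS1 dL1, fd_sub' vS2 vL2 p dS2 dL2,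
    fd_comb B vS1 vL1 p dB dS1 dL1, fd_comb B vS2 vL2 p dB dS2 dL2,
    fd_ob B vS1 vL1 p dB dS1 dL1, fd_ob B vS2 vL2 p dB dS2 dL2]
  have eS1 : fderiv ℝ vS1 p (1, 0, 0) =
      (M + ΓB p) * (vL1 p - vS1 p) / B p -
        (vS1 p * fderiv ℝ vS1 p (0, 1, 0) + vS2 p * fderiv ℝ vS1 p (0, 0, 1)) -
        γ * fderiv ℝ B p (0, 1, 0) / B p - fderiv ℝ P p (0, 1, 0) := by linarith
  have eS2 : fderiv ℝ vS2 p (1, 0, 0) =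
      (M + ΓB p) * (vL2 p - vS2 p) / B p -
        (vS1 p * fderiv ℝ vS2 p (0, 1, 0) + vS2 p * fderiv ℝ vS2 p (0, 0, 1)) -
        γ * fderiv ℝ B p (0, 0, 1) / B p - fderiv ℝ P p (0, 0, 1) := by linarith
  have eL1 : fderiv ℝ vL1 p (1, 0, 0) =
      M * (vS1 p - vL1 p) / (1 - B p) -
        (vL1 p * fderiv ℝ vL1 p (0, 1, 0) + vL2 p * fderiv ℝ vL1 p (0, 0, 1)) -
        fderiv ℝ P p (0, 1, 0) := by linarith
  have eL2 : fderiv ℝ vL2 p (1, 0, 0) =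
      M * (vS2 p - vL2 p) / (1 - B p) -
        (vL1 p * fderiv ℝ vL2 p (0, 1, 0) + vL2 p * fderiv ℝ vL2 p (0, 0, 1)) -
        fderiv ℝ P p (0, 0, 1) := by linarith
  constructor
  · rw [eS1, eL1]; field_simp; ring
  · rw [eS2, eL2]; field_simp; ring
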